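/- If T* = diag(u) K diag(v) minimizes the relaxed transport objective (so that u = (a ⊘ T*1)^{γ_a λ} and v = (b ⊘ (T*)ᵀ1)^{γ_b λ}), then u and v satisfy the fixed-point equations u = a^{γ_a λ/(γ_a λ + 1)} ⊙ (K v)^{−γ_a λ/(γ_a λ + 1)} and v = b^{γ_b λ/(γ_b λ + 1)} ⊙ (Kᵀ u)^{−γ_b λ/(γ_b λ + 1)}. -/
import Mathlib


open scoped BigOperators

lemma aux_fixed_point {x A S c : ℝ} (hx : 0 < x) (hA : 0 < A) (hS : 0 < S)
    (hc : 0 < c) (h : x = (A / (x * S)) ^ c) :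
    x = A ^ (c / (c + 1)) * S ^ (-c / (c + 1)) := by
  have hc1 : (0:ℝ) < c + 1 := by linarith
  have hq : 0 < A / (x * S) := div_pos hA (mul_pos hx hS)
  have hlog : Real.log x = c * (Real.log A - Real.log x - Real.log S) := by
    conv_lhs => rw [h]
    rw [Real.log_rpow hq, Real.log_div (ne_of_gt hA) (ne_of_gt (mul_pos hx hS)),
      Real.log_mul (ne_of_gt hx) (ne_of_gt hS)]
    ring
  have hlog2 : Real.log x = (c / (c + 1)) * Real.log A + (-c / (c + 1)) * Real.log S := by
    field_simp
    nlinarith [hlog]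
  have : x = Real.exp (Real.log x) := (Real.exp_log hx).symm
  rw [this, hlog2, Real.exp_add, Real.rpow_def_of_pos hA, Real.rpow_def_of_pos hS,
    mul_comm (Real.log A), mul_comm (Real.log S)]

/-- If `T* = diag(u) K diag(v)` with `u = (a ⊘ T*1)^{γₐλ}` and
`v = (b ⊘ (T*)ᵀ1)^{γ_bλ}`, then `u` and `v` satisfy the Sinkhorn-like fixed-point
equations `u = a^{γₐλ/(γₐλ+1)} ⊙ (Kv)^{−γₐλ/(γₐλ+1)}` and
`v = b^{γ_bλ/(γ_bλ+1)} ⊙ (Kᵀu)^{−γ_bλ/(γ_bλ+1)}`. -/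
theorem relaxed_sinkhorn_fixed_point {K : ℕ}
    (Kmat : Matrix (Fin K) (Fin K) ℝ) (a b u v : Fin K → ℝ)
    (lam γa γb : ℝ) (hlam : 0 < lam) (hγa : 0 < γa) (hγb : 0 < γb)
    (ha : ∀ i, 0 < a i) (hb : ∀ j, 0 < b j)
    (hu : ∀ i, 0 < u i) (hv : ∀ j, 0 < v j)
    (hKmat : ∀ i j, 0 < Kmat i j)
    (hufix : ∀ i, u i = (a i / (u i * ∑ j, Kmat i j * v j)) ^ (γa * lam))
    (hvfix : ∀ j, v j = (b j / (v j * ∑ i, Kmat i j * u i)) ^ (γb * lam)) :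
    (∀ i, u i = a i ^ (γa * lam / (γa * lam + 1))
        * (∑ j, Kmat i j * v j) ^ (-(γa * lam) / (γa * lam + 1))) ∧
    (∀ j, v j = b j ^ (γb * lam / (γb * lam + 1))
        * (∑ i, Kmat i j * u i) ^ (-(γb * lam) / (γb * lam + 1))) := by
  constructor
  · intro i
    have hS : 0 < ∑ j, Kmat i j * v j :=
      Finset.sum_pos (fun j _ => mul_pos (hKmat i j) (hv j)) ⟨i, Finset.mem_univ i⟩
    exact aux_fixed_point (hu i) (ha i) hS (mul_pos hγa hlam) (hufix i)
  · intro j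
    have hS : 0 < ∑ i, Kmat i j * u i :=
      Finset.sum_pos (fun i _ => mul_pos (hKmat i j) (hu i)) ⟨j, Finset.mem_univ j⟩
    exact aux_fixed_point (hv j) (hb j) hS (mul_pos hγb hlam) (hvfix j)
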